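/- Let [f] be a vertex in 𝒫 of rank n. Then every splitting of [f] has the form [x_i^{(n)} ∘ f] or [σ_i ∘ x_i^{(n)} ∘ f] for some i ∈ {1,…,n}, where σ_i : C(n+1) → C(n+1) acts as σ on the i-th copy of the Cantor set and as the identity elsewhere. Equivalently: for every k ∈ K_n and every i ∈ {1,…,n}, there exists j ∈ {1,…,n} such that K_{n+1} ∘ x_i^{(n)} ∘ k ∘ f equals K_{n+1} ∘ x_j^{(n)} ∘ f or K_{n+1} ∘ σ_j ∘ x_j^{(n)} ∘ f. -/

import Mathlib

/-! Basic setup: the Cantor set `Δ = ℕ → Bool` and `C n = Fin n × Δ`,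
the disjoint union of `n` copies of the Cantor set. -/

abbrev Δ : Type := ℕ → Bool
abbrev C (n : ℕ) : Type := Fin n × Δ

/-- A bijection between discrete spaces, as a homeomorphism. -/
def discHomeo {X Y : Type*} [TopologicalSpace X] [TopologicalSpace Y]
    [DiscreteTopology X] [DiscreteTopology Y] (e : X ≃ Y) : X ≃ₜ Y :=
  ⟨e, continuous_of_discreteTopology, continuous_of_discreteTopology⟩

/-- The permutation homeomorphism `p_α : C n ≃ₜ C n`, permuting the copies
of the Cantor set according to `α`. -/
def permC {n : ℕ} (α : Equiv.Perm (Fin n)) : C n ≃ₜ C n :=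
  (discHomeo α).prodCongr (Homeomorph.refl Δ)

/-- Cast between `C m` and `C n` when `m = n`. -/
def castC {m n : ℕ} (h : m = n) : C m ≃ₜ C n :=
  (discHomeo (finCongr h)).prodCongr (Homeomorph.refl Δ)

/-- `C (m + n)` is the disjoint union of `C m` and `C n` (first `m` copies,
then the remaining `n` copies). -/
def toSum (m n : ℕ) : C (m + n) ≃ₜ (C m) ⊕ (C n) :=
  ((discHomeo finSumFinEquiv.symm).prodCongr (Homeomorph.refl Δ)).trans
    (Homeomorph.sumProdDistrib)

/-- The direct sum `f ⊕ g` of homeomorphisms, acting as `f` on the first `m`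
copies (sent to the first `m'` copies) and as `g` on the last `n` copies. -/
def dsum {m m' n n' : ℕ} (f : C m ≃ₜ C m') (g : C n ≃ₜ C n') :
    C (m + n) ≃ₜ C (m' + n') :=
  ((toSum m n).trans (f.sumCongr g)).trans (toSum m' n').symm

/-- The split homeomorphism `x : C 1 ≃ₜ C 2`: a sequence starting with letter
`i` is sent to the `(i+1)`-st copy of the Cantor set, deleting the first letter. -/
def split : C 1 ≃ₜ C 2 where
  toFun p := (finTwoEquiv.symm (p.2 0), fun k => p.2 (k + 1))
  invFun p := (0, fun k => Nat.casesOn k (finTwoEquiv p.1) (fun j => p.2 j))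
  left_inv := by
    rintro ⟨i, w⟩
    refine Prod.ext (Subsingleton.elim _ _) ?_
    funext k
    cases k <;> simp
  right_inv := by
    rintro ⟨i, w⟩
    refine Prod.ext ?_ rfl
    simp
  continuous_toFun := by
    refine Continuous.prodMk ?_ ?_
    · exact Continuous.comp continuous_of_discreteTopology
        ((continuous_apply 0).comp continuous_snd)
    · exact continuous_pi fun k => (continuous_apply (k + 1)).comp continuous_snd
  continuous_invFun := by
    refine Continuous.prodMk continuous_const ?_
    refine continuous_pi fun k => ?_
    cases k with
    | zero => exact Continuous.comp continuous_of_discreteTopology continuous_fst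
    | succ j => exact (continuous_apply j).comp continuous_snd

/-- The split homeomorphism `x_i^{(n)} = id_{i-1} ⊕ x ⊕ id_{n-i} : C n ≃ₜ C (n+1)`
(with `i` zero-indexed, so `i : Fin n` splits the `(i+1)`-st copy). -/
def splitAt {n : ℕ} (i : Fin n) : C n ≃ₜ C (n + 1) :=
  ((castC (show n = (i : ℕ) + 1 + (n - 1 - i) by have := i.isLt; omega)).trans
    (dsum (dsum (Homeomorph.refl (C i)) split) (Homeomorph.refl (C (n - 1 - i))))).trans
    (castC (show (i : ℕ) + 2 + (n - 1 - i) = n + 1 by have := i.isLt; omega))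

/-- `IsForest f` says that `f : C m ≃ₜ C n` is a binary forest, i.e. a
(possibly empty) composition of split homeomorphisms.  A binary tree is a
binary forest with domain `C 1`. -/
inductive IsForest : ∀ {m n : ℕ}, (C m ≃ₜ C n) → Prop where
  | refl (m : ℕ) : IsForest (Homeomorph.refl (C m))
  | step {m n : ℕ} {f : C m ≃ₜ C n} (i : Fin n) (hf : IsForest f) :
      IsForest (f.trans (splitAt i))

/-! The Grigorchuk generators `σ, b, c, d`, defined via the Grigorchuk automaton:
on binary sequences, `σ` flips the first letter, and `b(0w)=0σ(w)`, `b(1w)=1c(w)`,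
`c(0w)=0σ(w)`, `c(1w)=1d(w)`, `d(0w)=0w`, `d(1w)=1b(w)`. -/

/-- States of the Grigorchuk automaton: the identity, `σ`, `b`, `c`, `d`. -/
inductive GS : Type | e | s | b | c | d
deriving DecidableEq

instance : Fintype GS :=
  ⟨{GS.e, GS.s, GS.b, GS.c, GS.d}, by intro x; cases x <;> simp⟩

instance : TopologicalSpace GS := ⊥
instance : DiscreteTopology GS := ⟨rfl⟩

/-- Output function of the Grigorchuk automaton. -/
def GS.out : GS → Bool → Bool
  | .s, i => !i
  | _,  i => i

/-- Transition function of the Grigorchuk automaton. -/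
def GS.step : GS → Bool → GS
  | .e, _ => .e
  | .s, _ => .e
  | .b, false => .s
  | .b, true  => .c
  | .c, false => .s
  | .c, true  => .d
  | .d, false => .e
  | .d, true  => .b

/-- The state of the automaton started in state `g` after reading `w 0, …, w (n-1)`. -/
def GS.stArr (g : GS) (w : Δ) : ℕ → GS
  | 0 => g
  | n + 1 => (GS.stArr g w n).step (w n)

/-- The action of the automaton state `g` on infinite binary sequences. -/
def GS.act (g : GS) (w : Δ) : Δ := fun n => (GS.stArr g w n).out (w n)

lemma GS.out_out : ∀ (g : GS) (i : Bool), g.out (g.out i) = i := by decide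

lemma GS.step_out : ∀ (g : GS) (i : Bool), g.step (g.out i) = g.step i := by decide

lemma GS.stArr_act (g : GS) (w : Δ) : ∀ n, GS.stArr g (GS.act g w) n = GS.stArr g w n := by
  intro n
  induction n with
  | zero => rfl
  | succ n ih => rw [GS.stArr, GS.stArr, ih, GS.act, GS.step_out]

lemma GS.act_act (g : GS) (w : Δ) : GS.act g (GS.act g w) = w := by
  funext n
  rw [GS.act, GS.stArr_act, GS.act, GS.out_out]

lemma GS.continuous_stArr (g : GS) (n : ℕ) : Continuous (fun w : Δ => GS.stArr g w n) := by
  induction n with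
  | zero => exact continuous_const
  | succ n ih =>
      exact Continuous.comp (f := fun w : Δ => ((GS.stArr g w n), w n))
        (g := fun p : GS × Bool => p.1.step p.2)
        continuous_of_discreteTopology (ih.prodMk (continuous_apply n))

lemma GS.continuous_act (g : GS) : Continuous (GS.act g) := by
  refine continuous_pi fun n => ?_
  exact Continuous.comp (f := fun w : Δ => ((GS.stArr g w n), w n))
    (g := fun p : GS × Bool => p.1.out p.2)
    continuous_of_discreteTopology ((GS.continuous_stArr g n).prodMk (continuous_apply n))

/-- The homeomorphism of the Cantor set determined by an automaton state. -/
def GS.homeo (g : GS) : Δ ≃ₜ Δ where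
  toFun := GS.act g
  invFun := GS.act g
  left_inv := GS.act_act g
  right_inv := GS.act_act g
  continuous_toFun := GS.continuous_act g
  continuous_invFun := GS.continuous_act g

/-- Lift a homeomorphism of the Cantor set to `C 1`. -/
def liftC1 (h : Δ ≃ₜ Δ) : C 1 ≃ₜ C 1 := (Homeomorph.refl (Fin 1)).prodCongr h

/-- The Grigorchuk generator `σ` (flips the first letter). -/
def gσ : C 1 ≃ₜ C 1 := liftC1 (GS.homeo .s)
/-- The Grigorchuk generator `b`. -/
def gb : C 1 ≃ₜ C 1 := liftC1 (GS.homeo .b)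
/-- The Grigorchuk generator `c`. -/
def gc : C 1 ≃ₜ C 1 := liftC1 (GS.homeo .c)
/-- The Grigorchuk generator `d`. -/
def gd : C 1 ≃ₜ C 1 := liftC1 (GS.homeo .d)

/-- The group of self-homeomorphisms of `C n`, with `(f * g) x = f (g x)`. -/
instance homeoGroup (n : ℕ) : Group (C n ≃ₜ C n) where
  mul f g := g.trans f
  one := Homeomorph.refl _
  inv := Homeomorph.symm
  mul_assoc a b c := rfl
  one_mul a := rfl
  mul_one a := rfl
  inv_mul_cancel a := Homeomorph.self_trans_symm a

/-- The first Grigorchuk group `𝒢 = ⟨σ, b, c, d⟩`. -/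
def Grig : Subgroup (C 1 ≃ₜ C 1) :=
  Subgroup.closure {gσ, gb, gc, gd}

/-- The set `K = {1, b, c, d}` of homeomorphisms of `C 1`. -/
def Kset : Set (C 1 ≃ₜ C 1) := {Homeomorph.refl (C 1), gb, gc, gd}

/-- The `n`-fold direct sum `k₁ ⊕ ⋯ ⊕ k_n` of homeomorphisms of `C 1`. -/
def dsumFam : {n : ℕ} → (Fin n → (C 1 ≃ₜ C 1)) → (C n ≃ₜ C n)
  | 0, _ => Homeomorph.refl _
  | n + 1, k => dsum (dsumFam (fun i : Fin n => k i.castSucc)) (k (Fin.last n))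

/-- The direct sum `h₁ ⊕ ⋯ ⊕ h_n` of a family of homeomorphisms
`h i : C 1 ≃ₜ C (m i)`. -/
def dsumFamH : {n : ℕ} → {m : Fin n → ℕ} → (∀ i, C 1 ≃ₜ C (m i)) →
    (C n ≃ₜ C (∑ i, m i))
  | 0, _, _ => castC (by simp)
  | n + 1, m, h =>
      (dsum (dsumFamH (fun i : Fin n => h i.castSucc)) (h (Fin.last n))).trans
        (castC (Fin.sum_univ_castSucc m).symm)

/-- The group `K_n = {p_α ∘ (k₁ ⊕ ⋯ ⊕ k_n) : α ∈ S_n, kᵢ ∈ K}`. -/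
def Kn (n : ℕ) : Set (C n ≃ₜ C n) :=
  {h | ∃ (α : Equiv.Perm (Fin n)) (k : Fin n → (C 1 ≃ₜ C 1)),
    (∀ i, k i ∈ Kset) ∧ h = (dsumFam k).trans (permC α)}

/-- `σ_j : C m ≃ₜ C m`, acting as `σ` on the `(j+1)`-st copy (zero-indexed `j`)
of the Cantor set and as the identity elsewhere. -/
def sigmaAt {m : ℕ} (j : Fin m) : C m ≃ₜ C m :=
  dsumFam (fun i => if i = j then gσ else Homeomorph.refl (C 1))

/-- Membership in the groupoid `𝔙` generated by all split homeomorphisms and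
all permutation homeomorphisms. -/
inductive InV : ∀ {m n : ℕ}, (C m ≃ₜ C n) → Prop where
  | split {n : ℕ} (i : Fin n) : InV (splitAt i)
  | perm {n : ℕ} (α : Equiv.Perm (Fin n)) : InV (permC α)
  | comp {m n p : ℕ} {f : C m ≃ₜ C n} {g : C n ≃ₜ C p} :
      InV f → InV g → InV (f.trans g)
  | inv {m n : ℕ} {f : C m ≃ₜ C n} : InV f → InV f.symm

/-- Membership in Röver's groupoid `𝔙𝒢`, generated by `𝔙` together with the
elements of the Grigorchuk group `𝒢`. -/
inductive InVG : ∀ {m n : ℕ}, (C m ≃ₜ C n) → Prop where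
  | split {n : ℕ} (i : Fin n) : InVG (splitAt i)
  | perm {n : ℕ} (α : Equiv.Perm (Fin n)) : InVG (permC α)
  | grig {g : C 1 ≃ₜ C 1} : g ∈ Grig → InVG g
  | comp {m n p : ℕ} {f : C m ≃ₜ C n} {g : C n ≃ₜ C p} :
      InVG f → InVG g → InVG (f.trans g)
  | inv {m n : ℕ} {f : C m ≃ₜ C n} : InVG f → InVG f.symm

/-- The coset `[f] = K_n f = {k ∘ f : k ∈ K_n}` of `f : C 1 ≃ₜ C n`. -/
def coset {n : ℕ} (f : C 1 ≃ₜ C n) : Set (C 1 ≃ₜ C n) :=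
  {h | ∃ k ∈ Kn n, h = f.trans k}

/-- The ambient type for vertices of the poset `𝒫`: a rank `n` together with
a set of homeomorphisms `C 1 ≃ₜ C n`. -/
def PP : Type := Σ n : ℕ, Set (C 1 ≃ₜ C n)

/-- A member of `PP` is a vertex of `𝒫` if it is the coset `[f] = K_n f` of
some `f : C 1 ≃ₜ C n` in Röver's groupoid. -/
def IsVert (v : PP) : Prop :=
  ∃ f : C 1 ≃ₜ C v.1, InVG f ∧ v.2 = coset f

/-- `w` is a splitting of `v` if `v = [f]` and `w = [x_i ∘ f]` for some
representative `f` and some index `i`. -/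
def SplittingOf (v w : PP) : Prop :=
  ∃ (n : ℕ) (f : C 1 ≃ₜ C n) (i : Fin n), InVG f ∧
    v = ⟨n, coset f⟩ ∧ w = ⟨n + 1, coset (f.trans (splitAt i))⟩

/-- `w` is an expansion of `v` (written `v ≤ w`): `w` is obtained from `v` by
a finite (possibly empty) sequence of splittings. -/
def Expansion : PP → PP → Prop := Relation.ReflTransGen SplittingOf

/-- The four possible elementary pieces `1, x, σ₁ ∘ x, x₁ ∘ x` (with their
ranks), used to define elementary expansions. -/
def elemSet : Set (Σ m : ℕ, (C 1 ≃ₜ C m)) :=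
  {⟨1, Homeomorph.refl (C 1)⟩, ⟨2, split⟩,
   ⟨2, split.trans (sigmaAt (0 : Fin 2))⟩,
   ⟨3, split.trans (splitAt (0 : Fin 2))⟩}

/-- `w` is an elementary expansion of `v`: `v = [f]` and
`w = [(u₁ ⊕ ⋯ ⊕ u_n) ∘ f]` where each `uᵢ ∈ {1, x, σ₁∘x, x₁∘x}`. -/
def ElemExp (v w : PP) : Prop :=
  ∃ (n : ℕ) (f : C 1 ≃ₜ C n) (m : Fin n → ℕ) (h : ∀ i, C 1 ≃ₜ C (m i)),
    InVG f ∧ (∀ i, (⟨m i, h i⟩ : Σ m : ℕ, (C 1 ≃ₜ C m)) ∈ elemSet) ∧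
    v = ⟨n, coset f⟩ ∧ w = ⟨∑ i, m i, coset (f.trans (dsumFamH h))⟩

section Dev

lemma permC_apply {n : ℕ} (α : Equiv.Perm (Fin n)) (i : Fin n) (w : Δ) :
    permC α (i, w) = (α i, w) := rfl

lemma castC_apply {m n : ℕ} (h : m = n) (i : Fin m) (w : Δ) :
    castC h (i, w) = (Fin.cast h i, w) := rfl

lemma toSum_castAdd {m n : ℕ} (i : Fin m) (w : Δ) :
    toSum m n (Fin.castAdd n i, w) = Sum.inl (i, w) := by
  simp [toSum, discHomeo]

lemma toSum_natAdd {m n : ℕ} (i : Fin n) (w : Δ) :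
    toSum m n (Fin.natAdd m i, w) = Sum.inr (i, w) := by
  simp [toSum, discHomeo]

lemma toSum_symm_inl {m n : ℕ} (i : Fin m) (w : Δ) :
    (toSum m n).symm (Sum.inl (i, w)) = (Fin.castAdd n i, w) := by
  simp [toSum, discHomeo]

lemma toSum_symm_inr {m n : ℕ} (i : Fin n) (w : Δ) :
    (toSum m n).symm (Sum.inr (i, w)) = (Fin.natAdd m i, w) := by
  simp [toSum, discHomeo]

lemma dsum_apply_left {m m' n n' : ℕ} (f : C m ≃ₜ C m') (g : C n ≃ₜ C n')
    (i : Fin m) (w : Δ) :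
    dsum f g (Fin.castAdd n i, w) = (Fin.castAdd n' (f (i, w)).1, (f (i, w)).2) := by
  show (toSum m' n').symm ((f.sumCongr g) (toSum m n (Fin.castAdd n i, w))) = _
  rw [toSum_castAdd]
  show (toSum m' n').symm (Sum.inl (f (i, w))) = _
  rw [← toSum_symm_inl (f (i,w)).1 (f (i,w)).2]

lemma dsum_apply_right {m m' n n' : ℕ} (f : C m ≃ₜ C m') (g : C n ≃ₜ C n')
    (i : Fin n) (w : Δ) :
    dsum f g (Fin.natAdd m i, w) = (Fin.natAdd m' (g (i, w)).1, (g (i, w)).2) := by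
  show (toSum m' n').symm ((f.sumCongr g) (toSum m n (Fin.natAdd m i, w))) = _
  rw [toSum_natAdd]
  show (toSum m' n').symm (Sum.inr (g (i, w))) = _
  rw [← toSum_symm_inr (g (i,w)).1 (g (i,w)).2]

lemma dsumFam_apply {n : ℕ} (k : Fin n → (C 1 ≃ₜ C 1)) (i : Fin n) (w : Δ) :
    dsumFam k (i, w) = (i, (k i (0, w)).2) := by
  induction n with
  | zero => exact absurd i.isLt (by omega)
  | succ n ih =>
      induction i using Fin.lastCases with
      | last =>
          have h : Fin.last n = Fin.natAdd n (0 : Fin 1) := by ext; simp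
          rw [h, dsumFam, dsum_apply_right]
          have h0 : ((0 : Fin 1), w) = ((Fin.last 0 : Fin 1), w) := by
            exact congrArg (·, w) (Subsingleton.elim _ _)
          refine Prod.ext ?_ rfl
          · exact congrArg (Fin.natAdd n) (Subsingleton.elim _ _)
      | cast j =>
          have h : Fin.castSucc j = Fin.castAdd 1 j := rfl
          rw [h, dsumFam, dsum_apply_left, ih]
          rfl

end Dev

section Dev2

lemma splitAt_eval {n : ℕ} (i : Fin n) (p : C n) :
    splitAt i p = castC (show (i : ℕ) + 2 + (n - 1 - i) = n + 1 by have := i.isLt; omega)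
      (dsum (dsum (Homeomorph.refl (C i)) split) (Homeomorph.refl (C (n - 1 - i)))
        (castC (show n = (i : ℕ) + 1 + (n - 1 - i) by have := i.isLt; omega) p)) := rfl

lemma splitAt_apply_lt {n : ℕ} (i m : Fin n) (hm : (m : ℕ) < (i : ℕ)) (w : Δ) :
    splitAt i (m, w) = (Fin.castSucc m, w) := by
  rw [splitAt_eval]
  simp only [castC_apply]
  have h1 : Fin.cast (show n = (i : ℕ) + 1 + (n - 1 - i) by have := i.isLt; omega) m
      = Fin.castAdd (n - 1 - i) (Fin.castAdd 1 (⟨m, hm⟩ : Fin i)) := by ext; simp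
  rw [h1, dsum_apply_left, dsum_apply_left]
  refine Prod.ext ?_ rfl
  ext; simp [castC_apply]

lemma splitAt_apply_gt {n : ℕ} (i m : Fin n) (hm : (i : ℕ) < (m : ℕ)) (w : Δ) :
    splitAt i (m, w) = (Fin.succ m, w) := by
  rw [splitAt_eval]
  simp only [castC_apply]
  have h1 : Fin.cast (show n = (i : ℕ) + 1 + (n - 1 - i) by have := i.isLt; omega) m
      = Fin.natAdd ((i : ℕ) + 1) (⟨m - (i+1), by have := m.isLt; omega⟩ : Fin (n - 1 - i)) := by
    ext; simp [castC_apply]; omega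
  rw [h1, dsum_apply_right]
  refine Prod.ext ?_ rfl
  ext; simp [castC_apply]; omega

lemma splitAt_apply_ne {n : ℕ} (i m : Fin n) (hm : m ≠ i) (w : Δ) :
    splitAt i (m, w) = (Fin.succAbove (Fin.castSucc i) m, w) := by
  rcases hm.lt_or_gt with h | h
  · rw [splitAt_apply_lt i m h, Fin.succAbove_of_castSucc_lt]
    exact Fin.castSucc_lt_castSucc_iff.mpr h
  · rw [splitAt_apply_gt i m h, Fin.succAbove_of_le_castSucc]
    exact Fin.castSucc_le_castSucc_iff.mpr (Fin.le_of_lt h)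

lemma splitAt_apply_eq {n : ℕ} (i : Fin n) (w : Δ) :
    splitAt i (i, w) = ((if w 0 then Fin.succ i else Fin.castSucc i), fun t => w (t + 1)) := by
  rw [splitAt_eval]
  simp only [castC_apply]
  have h1 : Fin.cast (show n = (i : ℕ) + 1 + (n - 1 - i) by have := i.isLt; omega) i
      = Fin.castAdd (n - 1 - i) (Fin.natAdd i (0 : Fin 1)) := by ext; simp
  rw [h1, dsum_apply_left, dsum_apply_right]
  have hs : split ((0 : Fin 1), w) = (finTwoEquiv.symm (w 0), fun t => w (t + 1)) := rfl
  rw [hs]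
  refine Prod.ext ?_ rfl
  cases hw : w 0 <;> ext <;> simp [hw, finTwoEquiv, castC_apply]

end Dev2

section Dev3

lemma GS.stArr_succ' (g : GS) (w : Δ) (n : ℕ) :
    GS.stArr g w (n + 1) = GS.stArr (g.step (w 0)) (fun t => w (t + 1)) n := by
  induction n with
  | zero => rfl
  | succ m ih => rw [GS.stArr, ih]; rfl

lemma GS.act_tail (g : GS) (w : Δ) :
    (fun t => GS.act g w (t + 1)) = GS.act (g.step (w 0)) (fun t => w (t + 1)) := by
  funext t
  rw [GS.act, GS.act, GS.stArr_succ']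

lemma GS.act_head (g : GS) (w : Δ) : GS.act g w 0 = g.out (w 0) := rfl

/-- The multiplication table relation for the automaton states. -/
def GS.T : GS → GS → GS → Bool
  | .e, x, y => x = y
  | x, .e, y => x = y
  | .s, .s, .e => true
  | .b, .b, .e => true
  | .c, .c, .e => true
  | .d, .d, .e => true
  | .b, .c, .d => true
  | .c, .b, .d => true
  | .b, .d, .c => true
  | .d, .b, .c => true
  | .c, .d, .b => true
  | .d, .c, .b => true
  | _, _, _ => false

lemma GS.T_out : ∀ g1 g2 g3 : GS, GS.T g1 g2 g3 → ∀ i, g2.out (g1.out i) = g3.out i := by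
  decide

lemma GS.T_step : ∀ g1 g2 g3 : GS, GS.T g1 g2 g3 →
    ∀ i, GS.T (g1.step i) (g2.step (g1.out i)) (g3.step i) := by
  decide

lemma GS.T_stArr {g1 g2 g3 : GS} (h : GS.T g1 g2 g3) (w : Δ) (n : ℕ) :
    GS.T (GS.stArr g1 w n) (GS.stArr g2 (GS.act g1 w) n) (GS.stArr g3 w n) := by
  induction n with
  | zero => exact h
  | succ m ih =>
      rw [GS.stArr, GS.stArr, GS.stArr]
      have := GS.T_step _ _ _ ih (w m)
      rwa [show GS.act g1 w m = (GS.stArr g1 w m).out (w m) from rfl]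

lemma GS.act_comp {g1 g2 g3 : GS} (h : GS.T g1 g2 g3) (w : Δ) :
    GS.act g2 (GS.act g1 w) = GS.act g3 w := by
  funext n
  rw [GS.act, GS.act, GS.act]
  exact GS.T_out _ _ _ (GS.T_stArr h w n) (w n)

lemma GS.homeo_trans {g1 g2 g3 : GS} (h : GS.T g1 g2 g3) :
    (GS.homeo g1).trans (GS.homeo g2) = GS.homeo g3 :=
  Homeomorph.ext (fun w => GS.act_comp h w)

lemma liftC1_trans (h1 h2 : Δ ≃ₜ Δ) :
    (liftC1 h1).trans (liftC1 h2) = liftC1 (h1.trans h2) :=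
  Homeomorph.ext (fun _ => rfl)

lemma liftC1_symm (h : Δ ≃ₜ Δ) : (liftC1 h).symm = liftC1 h.symm :=
  Homeomorph.ext (fun _ => rfl)

lemma homeo_symm (g : GS) : (GS.homeo g).symm = GS.homeo g :=
  Homeomorph.ext (fun _ => rfl)

lemma GS.stArr_e (w : Δ) (t : ℕ) : GS.stArr .e w t = .e := by
  induction t with
  | zero => rfl
  | succ m ih => rw [GS.stArr, ih]; rfl

lemma GS.act_e (w : Δ) : GS.act .e w = w := by
  funext t; rw [GS.act, GS.stArr_e]; rfl

/-- Multiplication table for `{e, b, c, d}`. -/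
def GS.mul : GS → GS → GS
  | .e, x => x
  | x, .e => x
  | .b, .b => .e
  | .c, .c => .e
  | .d, .d => .e
  | .b, .c => .d
  | .c, .b => .d
  | .b, .d => .c
  | .d, .b => .c
  | .c, .d => .b
  | .d, .c => .b
  | _, _ => .e

lemma GS.T_mul : ∀ g1 g2 : GS, g1 ≠ .s → g2 ≠ .s →
    GS.T g1 g2 (GS.mul g1 g2) ∧ GS.mul g1 g2 ≠ .s := by decide

lemma refl_eq_liftC1 : Homeomorph.refl (C 1) = liftC1 (GS.homeo .e) := by
  refine Homeomorph.ext (fun p => ?_)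
  refine Prod.ext rfl ?_
  exact (GS.act_e p.2).symm

lemma mem_Kset_iff {h : C 1 ≃ₜ C 1} :
    h ∈ Kset ↔ ∃ g : GS, g ≠ .s ∧ h = liftC1 (GS.homeo g) := by
  constructor
  · rintro (rfl | rfl | rfl | rfl)
    · exact ⟨.e, by decide, refl_eq_liftC1⟩
    · exact ⟨.b, by decide, rfl⟩
    · exact ⟨.c, by decide, rfl⟩
    · exact ⟨.d, by decide, rfl⟩
  · rintro ⟨g, hg, rfl⟩
    match g, hg with
    | .e, _ => exact Or.inl refl_eq_liftC1.symm
    | .b, _ => exact Or.inr (Or.inl rfl)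
    | .c, _ => exact Or.inr (Or.inr (Or.inl rfl))
    | .d, _ => exact Or.inr (Or.inr (Or.inr rfl))

lemma Kset_trans {a b : C 1 ≃ₜ C 1} (ha : a ∈ Kset) (hb : b ∈ Kset) :
    a.trans b ∈ Kset := by
  rw [mem_Kset_iff] at ha hb ⊢
  obtain ⟨g1, hg1, rfl⟩ := ha
  obtain ⟨g2, hg2, rfl⟩ := hb
  rw [liftC1_trans, GS.homeo_trans (GS.T_mul g1 g2 hg1 hg2).1]
  exact ⟨GS.mul g1 g2, (GS.T_mul g1 g2 hg1 hg2).2, rfl⟩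

lemma Kset_symm {a : C 1 ≃ₜ C 1} (ha : a ∈ Kset) : a.symm ∈ Kset := by
  rw [mem_Kset_iff] at ha ⊢
  obtain ⟨g, hg, rfl⟩ := ha
  exact ⟨g, hg, by rw [liftC1_symm, homeo_symm]⟩

lemma sigmaAt_apply {m : ℕ} (j : Fin m) (i : Fin m) (w : Δ) :
    sigmaAt j (i, w) = (i, if i = j then GS.act .s w else w) := by
  rw [sigmaAt, dsumFam_apply]
  split_ifs with h <;> simp [h, gσ, liftC1, GS.homeo]

end Dev3

section Dev4

lemma prod1_eq {p q : C 1} (h : p.2 = q.2) : p = q :=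
  Prod.ext (Subsingleton.elim _ _) h

lemma dsumFam_trans {n : ℕ} (k k' : Fin n → (C 1 ≃ₜ C 1)) :
    (dsumFam k).trans (dsumFam k') = dsumFam (fun i => (k i).trans (k' i)) := by
  refine Homeomorph.ext (fun p => ?_)
  obtain ⟨i, w⟩ := p
  show dsumFam k' (dsumFam k (i, w)) = _
  rw [dsumFam_apply, dsumFam_apply, dsumFam_apply]
  refine Prod.ext rfl ?_
  show ((k' i) (0, ((k i) (0, w)).2)).2 = ((k' i) ((k i) (0, w))).2
  exact congrArg (fun z => ((k' i) z).2) (prod1_eq rfl)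

lemma dsumFam_refl {n : ℕ} :
    dsumFam (fun _ : Fin n => Homeomorph.refl (C 1)) = Homeomorph.refl (C n) := by
  refine Homeomorph.ext (fun p => ?_)
  obtain ⟨i, w⟩ := p
  rw [dsumFam_apply]
  rfl

lemma permC_trans {n : ℕ} (α β : Equiv.Perm (Fin n)) :
    (permC α).trans (permC β) = permC (α.trans β) :=
  Homeomorph.ext (fun _ => rfl)

lemma permC_symm {n : ℕ} (α : Equiv.Perm (Fin n)) : (permC α).symm = permC α.symm :=
  Homeomorph.ext (fun _ => rfl)

lemma permC_one {n : ℕ} : permC (Equiv.refl (Fin n)) = Homeomorph.refl (C n) :=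
  Homeomorph.ext (fun _ => rfl)

lemma symm_unique {X Y : Type*} [TopologicalSpace X] [TopologicalSpace Y]
    {a : X ≃ₜ Y} {b : Y ≃ₜ X} (h : a.trans b = Homeomorph.refl X) : a.symm = b := by
  refine Homeomorph.ext (fun y => ?_)
  have h1 : (a.trans b) (a.symm y) = (Homeomorph.refl X) (a.symm y) := by rw [h]
  have h2 : b (a (a.symm y)) = a.symm y := h1
  rw [a.apply_symm_apply] at h2; exact h2.symm

lemma dsumFam_symm {n : ℕ} (k : Fin n → (C 1 ≃ₜ C 1)) :
    (dsumFam k).symm = dsumFam (fun i => (k i).symm) := by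
  refine symm_unique ?_
  rw [dsumFam_trans]
  rw [show (fun i => (k i).trans (k i).symm) = (fun _ : Fin n => Homeomorph.refl (C 1))
    from funext fun i => Homeomorph.self_trans_symm (k i)]
  exact dsumFam_refl

lemma perm_dsumFam {n : ℕ} (α : Equiv.Perm (Fin n)) (k : Fin n → (C 1 ≃ₜ C 1)) :
    (permC α).trans (dsumFam k) = (dsumFam (fun i => k (α i))).trans (permC α) := by
  refine Homeomorph.ext (fun p => ?_)
  obtain ⟨i, w⟩ := p
  show dsumFam k (permC α (i, w)) = permC α (dsumFam (fun i => k (α i)) (i, w))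
  rw [permC_apply, dsumFam_apply, dsumFam_apply, permC_apply]

lemma Kn_mul {n : ℕ} {a b : C n ≃ₜ C n} (ha : a ∈ Kn n) (hb : b ∈ Kn n) :
    a.trans b ∈ Kn n := by
  obtain ⟨α1, k1, hk1, rfl⟩ := ha
  obtain ⟨α2, k2, hk2, rfl⟩ := hb
  refine ⟨α1.trans α2, fun i => (k1 i).trans (k2 (α1 i)), fun i => Kset_trans (hk1 i) (hk2 (α1 i)), ?_⟩
  show (dsumFam k1).trans (((permC α1).trans (dsumFam k2)).trans (permC α2)) = _
  rw [perm_dsumFam]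
  show ((dsumFam k1).trans (dsumFam (fun i => k2 (α1 i)))).trans
    ((permC α1).trans (permC α2)) = _
  rw [dsumFam_trans, permC_trans]

lemma Kn_symm {n : ℕ} {a : C n ≃ₜ C n} (ha : a ∈ Kn n) : a.symm ∈ Kn n := by
  obtain ⟨α, k, hk, rfl⟩ := ha
  refine ⟨α.symm, fun i => (k (α.symm i)).symm, fun i => Kset_symm (hk (α.symm i)), ?_⟩
  refine symm_unique ?_
  show (dsumFam k).trans (((permC α).trans
      (dsumFam (fun i => (k (α.symm i)).symm))).trans (permC α.symm)) = _
  rw [perm_dsumFam]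
  show ((dsumFam k).trans (dsumFam (fun i => (k (α.symm (α i))).symm))).trans
      ((permC α).trans (permC α.symm)) = _
  rw [dsumFam_trans, permC_trans, Equiv.self_trans_symm, permC_one]
  rw [show (fun i => (k i).trans (k (α.symm (α i))).symm)
      = (fun _ : Fin n => Homeomorph.refl (C 1)) from funext fun i => by
    rw [Equiv.symm_apply_apply, Homeomorph.self_trans_symm]]
  rw [dsumFam_refl]
  exact Homeomorph.ext fun _ => rfl

end Dev4

section Dev5

lemma succAbove_castSucc_self {n : ℕ} (j : Fin n) :
    Fin.succAbove j.castSucc j = j.succ :=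
  Fin.succAbove_of_le_castSucc _ _ (le_refl _)

lemma succAbove_ne' {n : ℕ} (p : Fin (n + 1)) (i : Fin n) : p.succAbove i ≠ p :=
  Fin.succAbove_ne p i

/-- The permutation of `Fin (n+1)` induced by `α` after splitting slot `α⁻¹ i`. -/
def permInd {n : ℕ} (α : Equiv.Perm (Fin n)) (i : Fin n) : Equiv.Perm (Fin (n + 1)) :=
  (finSuccEquiv' ((α.symm i).castSucc)).trans
    ((Equiv.optionCongr α).trans (finSuccEquiv' i.castSucc).symm)

lemma permInd_castSucc {n : ℕ} (α : Equiv.Perm (Fin n)) (i : Fin n) :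
    permInd α i ((α.symm i).castSucc) = i.castSucc := by
  simp [permInd, finSuccEquiv'_at, finSuccEquiv'_symm_none]

lemma permInd_succAbove {n : ℕ} (α : Equiv.Perm (Fin n)) (i : Fin n) (m : Fin n) :
    permInd α i (Fin.succAbove ((α.symm i).castSucc) m) = Fin.succAbove i.castSucc (α m) := by
  simp [permInd, finSuccEquiv'_succAbove, finSuccEquiv'_symm_some]

lemma perm_splitAt {n : ℕ} (α : Equiv.Perm (Fin n)) (i : Fin n) :
    (permC α).trans (splitAt i) = (splitAt (α.symm i)).trans (permC (permInd α i)) := by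
  refine Homeomorph.ext (fun p => ?_)
  obtain ⟨m, w⟩ := p
  show splitAt i (permC α (m, w)) = permC (permInd α i) (splitAt (α.symm i) (m, w))
  rw [permC_apply]
  by_cases hm : m = α.symm i
  · subst hm
    rw [α.apply_symm_apply, splitAt_apply_eq, splitAt_apply_eq, permC_apply]
    cases hw : w 0
    · rw [if_neg Bool.false_ne_true, if_neg Bool.false_ne_true, permInd_castSucc]
    · rw [if_pos rfl, if_pos rfl, ← succAbove_castSucc_self (α.symm i), permInd_succAbove,
        α.apply_symm_apply, succAbove_castSucc_self]
  · have hαm : α m ≠ i := fun h => hm (by rw [← h, Equiv.symm_apply_apply])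
    rw [splitAt_apply_ne _ _ hαm, splitAt_apply_ne _ _ hm, permC_apply, permInd_succAbove]

/-- The inserted family of `K`-elements for the dsumFam–split commutation. -/
def insFam {n : ℕ} (k : Fin n → (C 1 ≃ₜ C 1)) (j : Fin n) (g : GS) :
    Fin (n + 1) → (C 1 ≃ₜ C 1) :=
  Fin.insertNth j.castSucc (Homeomorph.refl (C 1))
    (fun m => if m = j then liftC1 (GS.homeo (g.step true)) else k m)

lemma insFam_mem {n : ℕ} {k : Fin n → (C 1 ≃ₜ C 1)} (hk : ∀ i, k i ∈ Kset)
    {j : Fin n} {g : GS} (hg : g ≠ .s) : ∀ t, insFam k j g t ∈ Kset := by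
  intro t
  by_cases ht : t = j.castSucc
  · subst ht
    rw [insFam, Fin.insertNth_apply_same]
    exact Or.inl rfl
  · obtain ⟨m, rfl⟩ := Fin.exists_succAbove_eq ht
    rw [insFam, Fin.insertNth_apply_succAbove]
    by_cases hmj : m = j
    · rw [if_pos hmj, mem_Kset_iff]
      exact ⟨g.step true, by revert hg; cases g <;> decide, rfl⟩
    · rw [if_neg hmj]; exact hk m

lemma succ_ne_castSucc {n : ℕ} (j : Fin n) : j.succ ≠ j.castSucc := by
  simp [Fin.ext_iff]

lemma dsumFam_splitAt_core {n : ℕ} (k : Fin n → (C 1 ≃ₜ C 1)) (j : Fin n) (g : GS)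
    (hg : k j = liftC1 (GS.homeo g)) (hout : ∀ i, g.out i = i)
    (hstep : g.step false = .e ∨ g.step false = .s) (S : C (n+1) ≃ₜ C (n+1))
    (hS : ∀ (t : Fin (n+1)) (w : Δ),
      S (t, w) = (t, if t = j.castSucc ∧ g.step false = .s then GS.act .s w else w)) :
    (dsumFam k).trans (splitAt j) =
      (splitAt j).trans (S.trans (dsumFam (insFam k j g))) := by
  refine Homeomorph.ext (fun p => ?_)
  obtain ⟨m, w⟩ := p
  show splitAt j (dsumFam k (m, w)) =
    dsumFam (insFam k j g) (S (splitAt j (m, w)))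
  rw [dsumFam_apply]
  by_cases hm : m = j
  · subst hm
    rw [hg]
    show splitAt m (m, GS.act g w) = _
    rw [splitAt_apply_eq, splitAt_apply_eq]
    rw [GS.act_head, hout, GS.act_tail]
    cases hw : w 0
    · rw [if_neg Bool.false_ne_true, hS]
      rcases hstep with he | hs
      · rw [if_neg (fun hc => by rw [he] at hc; exact GS.noConfusion hc.2), dsumFam_apply]
        refine Prod.ext rfl ?_
        show GS.act (g.step false) _ = ((insFam k m g m.castSucc) (0, _)).2
        rw [insFam, Fin.insertNth_apply_same, he, GS.act_e]
        rfl
      · rw [if_pos ⟨rfl, hs⟩, dsumFam_apply]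
        refine Prod.ext rfl ?_
        show GS.act (g.step false) _ = ((insFam k m g m.castSucc) (0, GS.act .s _)).2
        rw [insFam, Fin.insertNth_apply_same, hs]
        rfl
    · rw [if_pos rfl, hS, if_neg (fun hc => succ_ne_castSucc m hc.1), dsumFam_apply]
      refine Prod.ext rfl ?_
      show GS.act (g.step true) _ = ((insFam k m g m.succ) (0, _)).2
      rw [insFam, ← succAbove_castSucc_self m, Fin.insertNth_apply_succAbove, if_pos rfl]
      rfl
  · rw [splitAt_apply_ne _ _ hm, splitAt_apply_ne _ _ hm, hS,
      if_neg (fun hc => succAbove_ne' _ _ hc.1), dsumFam_apply]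
    refine Prod.ext rfl ?_
    show ((k m) (0, w)).2 = ((insFam k j g (Fin.succAbove j.castSucc m)) (0, w)).2
    rw [insFam, Fin.insertNth_apply_succAbove, if_neg hm]

end Dev5

section Dev6

lemma coset_eq {N : ℕ} (a b : C 1 ≃ₜ C N) (κ : C N ≃ₜ C N) (hκ : κ ∈ Kn N)
    (h : a = b.trans κ) : coset a = coset b := by
  ext x
  simp only [coset, Set.mem_setOf_eq]
  constructor
  · rintro ⟨k, hk, rfl⟩
    exact ⟨κ.trans k, Kn_mul hκ hk, by rw [h]; rfl⟩
  · rintro ⟨k, hk, rfl⟩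
    refine ⟨κ.symm.trans k, Kn_mul (Kn_symm hκ) hk, ?_⟩
    rw [h]
    show b.trans k = b.trans (κ.trans (κ.symm.trans k))
    rw [show κ.trans (κ.symm.trans k) = (κ.trans κ.symm).trans k from rfl,
      Homeomorph.self_trans_symm]
    exact Homeomorph.ext fun x => rfl

lemma GS.out_id : ∀ g : GS, g ≠ .s → ∀ i, g.out i = i := by decide

lemma GS.step_false : ∀ g : GS, g ≠ .s → g.step false = .e ∨ g.step false = .s := by decide

end Dev6

theorem splitting_classification (n : ℕ) (f : C 1 ≃ₜ C n) (hf : InVG f)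
    (k : C n ≃ₜ C n) (hk : k ∈ Kn n) (i : Fin n) :
    ∃ j : Fin n,
      coset ((f.trans k).trans (splitAt i)) = coset (f.trans (splitAt j)) ∨
      coset ((f.trans k).trans (splitAt i))
        = coset (f.trans ((splitAt j).trans (sigmaAt j.castSucc))) := by
  obtain ⟨α, kk, hkk, rfl⟩ := hk
  set j0 : Fin n := α.symm i with hj0
  obtain ⟨g, hg, hkj⟩ := mem_Kset_iff.mp (hkk j0)
  have hout := GS.out_id g hg
  have hstep := GS.step_false g hg
  refine ⟨j0, ?_⟩
  set κ : C (n+1) ≃ₜ C (n+1) := (dsumFam (insFam kk j0 g)).trans (permC (permInd α i)) with hκdef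
  have hκ : κ ∈ Kn (n+1) := ⟨permInd α i, insFam kk j0 g, insFam_mem hkk hg, rfl⟩
  rcases Classical.em (g.step false = .s) with hs | hs
  · -- sigma case
    have hS : ∀ (t : Fin (n+1)) (w : Δ),
        sigmaAt j0.castSucc (t, w)
          = (t, if t = j0.castSucc ∧ g.step false = .s then GS.act .s w else w) := by
      intro t w
      rw [sigmaAt_apply]
      simp [hs]
    have key := dsumFam_splitAt_core kk j0 g hkj hout hstep (sigmaAt j0.castSucc) hS
    have hBig : ((dsumFam kk).trans (permC α)).trans (splitAt i)
        = ((splitAt j0).trans (sigmaAt j0.castSucc)).trans κ := by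
      show (dsumFam kk).trans ((permC α).trans (splitAt i)) = _
      rw [perm_splitAt]
      show ((dsumFam kk).trans (splitAt j0)).trans (permC (permInd α i)) = _
      rw [key]
      rfl
    exact Or.inr (coset_eq _ _ κ hκ (congrArg (f.trans ·) hBig))
  · -- identity case
    have he : g.step false = .e := by rcases hstep with h | h; exact h; exact absurd h hs
    have hS : ∀ (t : Fin (n+1)) (w : Δ),
        (Homeomorph.refl (C (n+1))) (t, w)
          = (t, if t = j0.castSucc ∧ g.step false = .s then GS.act .s w else w) := by
      intro t w
      simp [he]
    have key := dsumFam_splitAt_core kk j0 g hkj hout hstep (Homeomorph.refl _) hS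
    have hBig : ((dsumFam kk).trans (permC α)).trans (splitAt i)
        = (splitAt j0).trans κ := by
      show (dsumFam kk).trans ((permC α).trans (splitAt i)) = _
      rw [perm_splitAt]
      show ((dsumFam kk).trans (splitAt j0)).trans (permC (permInd α i)) = _
      rw [key]
      rfl
    exact Or.inl (coset_eq _ _ κ hκ (congrArg (f.trans ·) hBig))
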